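/- Let (X, B, μ) be a probability space and let (E_i) be a sequence of measurable sets with μ(E_i) ≥ a > 0 for all i. Then for every k ≥ 1 and ε > 0 there exists N = N(a,k,ε) such that any collection of at least N of the sets E_i contains k sets whose intersection has measure at least a^k − ε. -/

import Mathlib

open MeasureTheory
open scoped ENNReal

lemma gillis_count (n : ℕ) : ∀ k : ℕ, n ^ k ≤ n.descFactorial k + k ^ 2 * n ^ (k - 1) := by
  intro k
  induction k with
  | zero => simp
  | succ k ih =>
    rcases Nat.eq_zero_or_pos k with rfl | hk
    · simp [Nat.descFactorial]
    have h1 : n * n.descFactorial k ≤ n.descFactorial (k + 1) + k * n ^ k := by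
      rcases le_or_gt k n with hkn | hkn
      · calc n * n.descFactorial k = (n - k) * n.descFactorial k + k * n.descFactorial k := by
              rw [← add_mul]; congr 1; omega
          _ ≤ n.descFactorial (k + 1) + k * n ^ k := by
              rw [Nat.descFactorial_succ]
              exact Nat.add_le_add_left (Nat.mul_le_mul_left _ (Nat.descFactorial_le_pow _ _)) _
      · rw [Nat.descFactorial_eq_zero_iff_lt.2 hkn]
        simp
    have h2 : n * n ^ (k - 1) ≤ n ^ k := by
      obtain ⟨m, rfl⟩ : ∃ m, k = m + 1 := ⟨k - 1, by omega⟩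
      simp only [Nat.add_sub_cancel]
      exact le_of_eq (pow_succ' n m).symm
    calc n ^ (k + 1) = n * n ^ k := pow_succ' n k
      _ ≤ n * (n.descFactorial k + k ^ 2 * n ^ (k - 1)) := Nat.mul_le_mul_left _ ih
      _ = n * n.descFactorial k + k ^ 2 * (n * n ^ (k - 1)) := by ring
      _ ≤ (n.descFactorial (k + 1) + k * n ^ k) + k ^ 2 * n ^ k :=
          Nat.add_le_add h1 (Nat.mul_le_mul_left _ h2)
      _ ≤ n.descFactorial (k + 1) + (k + 1) ^ 2 * n ^ (k + 1 - 1) := by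
          simp only [Nat.add_sub_cancel]
          nlinarith [Nat.zero_le (n ^ k)]

lemma gillis_jensen {X : Type*} [MeasurableSpace X] (μ : Measure X) [IsProbabilityMeasure μ]
    {g : X → ℝ≥0∞} (hg : Measurable g) (k : ℕ) :
    (∫⁻ x, g x ∂μ) ^ k ≤ ∫⁻ x, g x ^ k ∂μ := by
  rcases Nat.lt_or_ge k 2 with hk2 | hk2
  · interval_cases k <;> simp [lintegral_one]
  · have hk1 : (1 : ℝ) < (k : ℝ) := by exact_mod_cast hk2.trans_lt' one_lt_two
    have hpq : (k : ℝ).HolderConjugate (Real.conjExponent k) :=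
      Real.HolderConjugate.conjExponent hk1
    have h := ENNReal.lintegral_mul_le_Lp_mul_Lq μ (f := g) (g := fun _ => 1) hpq
      hg.aemeasurable aemeasurable_const
    simp only [Pi.mul_apply, mul_one, ENNReal.one_rpow, lintegral_const, measure_univ,
      one_mul, ENNReal.one_rpow] at h
    have h' : ∫⁻ x, g x ∂μ ≤ (∫⁻ x, g x ^ (k : ℝ) ∂μ) ^ (1 / (k : ℝ)) := by
      simpa using h
    have hk0 : (k : ℝ) ≠ 0 := by positivity
    calc (∫⁻ x, g x ∂μ) ^ k = (∫⁻ x, g x ∂μ) ^ ((k : ℕ) : ℝ) := (ENNReal.rpow_natCast _ k).symm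
      _ ≤ ((∫⁻ x, g x ^ (k : ℝ) ∂μ) ^ (1 / (k : ℝ))) ^ ((k : ℕ) : ℝ) :=
          ENNReal.rpow_le_rpow h' (by positivity)
      _ = ∫⁻ x, g x ^ (k : ℝ) ∂μ := by
          rw [← ENNReal.rpow_mul, one_div, inv_mul_cancel₀ hk0, ENNReal.rpow_one]
      _ = ∫⁻ x, g x ^ k ∂μ := by
          simp_rw [ENNReal.rpow_natCast]


/-- Gillis's lemma: if `(E i)` are measurable sets of measure at least `a > 0` in a
probability space, then for every `k ≥ 1` and `ε > 0` there is `N` such that among any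
`N` of the sets one can find `k` whose intersection has measure at least `a^k - ε`. -/
theorem gillis {X : Type*} [MeasurableSpace X] (μ : Measure X) [IsProbabilityMeasure μ]
    (E : ℕ → Set X) (hE : ∀ i, MeasurableSet (E i))
    (a : ℝ) (ha : 0 < a) (haE : ∀ i, a ≤ (μ (E i)).toReal)
    (k : ℕ) (hk : 1 ≤ k) (ε : ℝ) (hε : 0 < ε) :
    ∃ N : ℕ, ∀ s : Finset ℕ, N ≤ s.card →
      ∃ t ⊆ s, t.card = k ∧ a ^ k - ε ≤ (μ (⋂ i ∈ t, E i)).toReal := by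
  classical
  obtain ⟨M, hM⟩ := exists_nat_gt ((k : ℝ) ^ 2 / ε)
  refine ⟨k + M, fun s hs => ?_⟩
  by_contra hcon
  push_neg at hcon
  set n := s.card with hn
  have hkn : k ≤ n := le_trans (Nat.le_add_right _ _) hs
  have hMn : M ≤ n := le_trans (Nat.le_add_left _ _) hs
  obtain ⟨t₀, ht₀s, ht₀c⟩ := Finset.exists_subset_card_eq hkn
  have hεa : 0 < a ^ k - ε := lt_of_le_of_lt ENNReal.toReal_nonneg (hcon t₀ ht₀s ht₀c)
  set c := ENNReal.ofReal (a ^ k - ε) with hc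
  have key : ∀ t ⊆ s, t.card = k → μ (⋂ i ∈ t, E i) ≤ c := by
    intro t hts htc
    rw [← ENNReal.ofReal_toReal (measure_ne_top μ _)]
    exact ENNReal.ofReal_le_ofReal (hcon t hts htc).le
  set f : ↥s → X → ℝ≥0∞ := fun i => (E i).indicator 1 with hf
  have hfm : ∀ i : ↥s, Measurable (f i) := fun i => measurable_one.indicator (hE i)
  set g : X → ℝ≥0∞ := fun x => ∑ i : ↥s, f i x with hg
  have hgm : Measurable g := Finset.measurable_sum _ fun i _ => hfm i
  have hint : ∫⁻ x, g x ∂μ = ∑ i : ↥s, μ (E (i : ℕ)) := by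
    rw [lintegral_finset_sum _ fun i _ => hfm i]
    exact Finset.sum_congr rfl fun i _ => lintegral_indicator_one (hE _)
  have hlow : ENNReal.ofReal a * n ≤ ∫⁻ x, g x ∂μ := by
    rw [hint]
    calc ENNReal.ofReal a * n = ∑ _i : ↥s, ENNReal.ofReal a := by
          rw [Finset.sum_const, Finset.card_univ, Fintype.card_coe, nsmul_eq_mul, mul_comm]
      _ ≤ ∑ i : ↥s, μ (E (i : ℕ)) :=
          Finset.sum_le_sum fun i _ => ENNReal.ofReal_le_of_le_toReal (haE _)
  -- expansion of the k-th power
  have hiinter : ∀ w : Fin k → ↥s, MeasurableSet (⋂ j, E ((w j : ℕ))) :=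
    fun w => MeasurableSet.iInter fun j => hE _
  have hexp : ∫⁻ x, g x ^ k ∂μ = ∑ w : Fin k → ↥s, μ (⋂ j, E ((w j : ℕ))) := by
    have hpt : ∀ x, g x ^ k = ∑ w : Fin k → ↥s, (⋂ j, E ((w j : ℕ))).indicator 1 x := by
      intro x
      rw [hg]
      rw [Fintype.sum_pow (fun i : ↥s => f i x) k]
      refine Finset.sum_congr rfl fun w _ => ?_
      by_cases hx : ∀ j, x ∈ E ((w j : ℕ))
      · rw [Set.indicator_of_mem (Set.mem_iInter.2 hx)]
        simp only [hf, Pi.one_apply]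
        rw [Finset.prod_eq_one fun j _ => by rw [Set.indicator_of_mem (hx j)]; rfl]
      · push_neg at hx
        obtain ⟨j, hj⟩ := hx
        rw [Set.indicator_of_notMem (fun hmem => hj (Set.mem_iInter.1 hmem j))]
        exact Finset.prod_eq_zero (Finset.mem_univ j)
          (by simp only [hf]; rw [Set.indicator_of_notMem hj])
    simp_rw [hpt]
    rw [lintegral_finset_sum _ fun w _ => measurable_one.indicator (hiinter w)]
    exact Finset.sum_congr rfl fun w _ => lintegral_indicator_one (hiinter w)
  -- bound each term
  have hterm : ∀ w : Fin k → ↥s,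
      μ (⋂ j, E ((w j : ℕ))) ≤ if Function.Injective w then c else 1 := by
    intro w
    split_ifs with hw
    · have heq : (⋂ j, E ((w j : ℕ))) = ⋂ i ∈ Finset.image (fun j => ((w j : ℕ))) Finset.univ, E i := by
        ext x; simp
      rw [heq]
      refine key _ (fun i hi => ?_) ?_
      · simp only [Finset.mem_image, Finset.mem_univ, true_and] at hi
        obtain ⟨j, rfl⟩ := hi
        exact (w j).2
      · have hinj : Function.Injective fun j => ((w j : ℕ)) :=
          fun x y hxy => hw (Subtype.val_injective hxy)
        rw [Finset.card_image_of_injective _ hinj, Finset.card_univ, Fintype.card_fin]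
    · exact prob_le_one
  -- counting injective tuples
  have hcount : (Finset.univ.filter fun w : Fin k → ↥s => Function.Injective w).card
      = n.descFactorial k := by
    rw [← Fintype.card_subtype,
      Fintype.card_congr (Equiv.subtypeInjectiveEquivEmbedding (Fin k) ↥s),
      Fintype.card_embedding_eq, Fintype.card_coe, Fintype.card_fin]
  have hcard : Fintype.card (Fin k → ↥s) = n ^ k := by
    rw [Fintype.card_fun, Fintype.card_coe, Fintype.card_fin]
  set d := n.descFactorial k with hd
  have hsum : ∑ w : Fin k → ↥s, μ (⋂ j, E ((w j : ℕ))) ≤ d * c + ((n ^ k - d : ℕ) : ℝ≥0∞) := by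
    calc ∑ w : Fin k → ↥s, μ (⋂ j, E ((w j : ℕ)))
        ≤ ∑ w : Fin k → ↥s, if Function.Injective w then c else 1 :=
          Finset.sum_le_sum fun w _ => hterm w
      _ = d * c + ((n ^ k - d : ℕ) : ℝ≥0∞) := by
          rw [Finset.sum_ite, Finset.sum_const, Finset.sum_const, hcount]
          have hfilters : (Finset.univ.filter fun w : Fin k → ↥s => ¬ Function.Injective w).card
              = n ^ k - d := by
            have := Finset.card_filter_add_card_filter_not
              (s := (Finset.univ : Finset (Fin k → ↥s)))
              (p := fun w => Function.Injective w)
            rw [Finset.card_univ, hcard, hcount] at this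
            omega
          rw [hfilters, nsmul_eq_mul, nsmul_eq_mul, mul_one]
  -- combine
  have hdle : d ≤ n ^ k := Nat.descFactorial_le_pow _ _
  have hsub : n ^ k - d ≤ k ^ 2 * n ^ (k - 1) := by
    have := gillis_count n k
    omega
  have main : (ENNReal.ofReal a * n) ^ k
      ≤ (n : ℝ≥0∞) ^ k * c + ((k : ℝ≥0∞)) ^ 2 * (n : ℝ≥0∞) ^ (k - 1) := by
    calc (ENNReal.ofReal a * n) ^ k ≤ (∫⁻ x, g x ∂μ) ^ k := by gcongr
      _ ≤ ∫⁻ x, g x ^ k ∂μ := gillis_jensen μ hgm k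
      _ = ∑ w : Fin k → ↥s, μ (⋂ j, E ((w j : ℕ))) := hexp
      _ ≤ d * c + ((n ^ k - d : ℕ) : ℝ≥0∞) := hsum
      _ ≤ (n : ℝ≥0∞) ^ k * c + ((k : ℝ≥0∞)) ^ 2 * (n : ℝ≥0∞) ^ (k - 1) := by
          gcongr
          · calc (d : ℝ≥0∞) ≤ ((n ^ k : ℕ) : ℝ≥0∞) := Nat.cast_le.2 hdle
              _ = (n : ℝ≥0∞) ^ k := by push_cast; ring
          · calc ((n ^ k - d : ℕ) : ℝ≥0∞) ≤ ((k ^ 2 * n ^ (k - 1) : ℕ) : ℝ≥0∞) :=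
                Nat.cast_le.2 hsub
              _ = ((k : ℝ≥0∞)) ^ 2 * (n : ℝ≥0∞) ^ (k - 1) := by push_cast; ring
  -- pass to the reals
  have hfin : (n : ℝ≥0∞) ^ k * c + ((k : ℝ≥0∞)) ^ 2 * (n : ℝ≥0∞) ^ (k - 1) ≠ ⊤ := by
    apply ENNReal.add_ne_top.2
    constructor
    · exact ENNReal.mul_ne_top (by simp [ENNReal.pow_ne_top]) ENNReal.ofReal_ne_top
    · exact ENNReal.mul_ne_top (by simp [ENNReal.pow_ne_top]) (by simp [ENNReal.pow_ne_top])
  have hreal : (a * n) ^ k ≤ (n : ℝ) ^ k * (a ^ k - ε) + (k : ℝ) ^ 2 * (n : ℝ) ^ (k - 1) := by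
    have h := ENNReal.toReal_mono hfin main
    rw [ENNReal.toReal_pow, ENNReal.toReal_mul, ENNReal.toReal_ofReal ha.le,
      ENNReal.toReal_natCast] at h
    rw [ENNReal.toReal_add (ENNReal.mul_ne_top (by simp [ENNReal.pow_ne_top]) ENNReal.ofReal_ne_top)
      (ENNReal.mul_ne_top (by simp [ENNReal.pow_ne_top]) (by simp [ENNReal.pow_ne_top]))] at h
    simp only [ENNReal.toReal_mul, ENNReal.toReal_pow, ENNReal.toReal_natCast,
      ENNReal.toReal_ofReal hεa.le] at h
    exact h
  -- derive the contradiction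
  have hn1 : 1 ≤ n := le_trans hk hkn
  have hpow : (0 : ℝ) < (n : ℝ) ^ (k - 1) := by positivity
  have hnk : (n : ℝ) ^ k = (n : ℝ) ^ (k - 1) * n := by
    conv_lhs => rw [show k = (k - 1) + 1 by omega]
    rw [pow_succ]
  have hεn : ε * n ≤ (k : ℝ) ^ 2 := by
    have h1 : ε * ((n : ℝ) ^ (k - 1) * n) ≤ (k : ℝ) ^ 2 * (n : ℝ) ^ (k - 1) := by
      have := hreal
      rw [mul_pow, hnk] at this
      nlinarith
    nlinarith
  have hMε : (k : ℝ) ^ 2 < ε * M := by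
    rw [div_lt_iff₀ hε] at hM
    linarith
  have hnM : ε * M ≤ ε * n := by
    have : (M : ℝ) ≤ n := Nat.cast_le.2 hMn
    nlinarith
  linarith
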